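/- Let κ ∈ ℂ with κ ≠ 0. Then the function r ↦ (r³/(r−1))·|sin(κr)/r|² = (r/(r−1))·|sin(κr)|² is not integrable on (2, ∞); that is, the large-r radial solution R(r) = sin(κr)/r fails the square-integrability condition ‖R‖² = ∫ r³|R(r)|²/(r−1) dr < ∞ and hence does not belong to the Hilbert space. -/

import Mathlib

open MeasureTheory

lemma aux_norm_sin_sq (x y : ℝ) :
    ‖Complex.sin ((x : ℂ) + (y : ℂ) * Complex.I)‖ ^ 2
      = Real.sin x ^ 2 + Real.sinh y ^ 2 := by
  rw [Complex.sin_add_mul_I]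
  have h1 : Complex.sin (x : ℂ) * Complex.cosh (y : ℂ)
      + Complex.cos (x : ℂ) * Complex.sinh (y : ℂ) * Complex.I
      = ((Real.sin x * Real.cosh y : ℝ) : ℂ)
        + ((Real.cos x * Real.sinh y : ℝ) : ℂ) * Complex.I := by
    push_cast [Complex.ofReal_sin, Complex.ofReal_cos, Complex.ofReal_sinh,
      Complex.ofReal_cosh]
    ring
  rw [h1, Complex.sq_norm, Complex.normSq_add_mul_I]
  nlinarith [Real.sin_sq_add_cos_sq x, Real.cosh_sq y]

/-- For `κ ≠ 0`, the large-`r` Klein–Gordon radial solution `sin(κr)/r` fails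
square integrability: `r³/(r−1)·|sin(κr)/r|² = r/(r−1)·|sin(κr)|²` is not
integrable on `(2, ∞)`, so the solution does not belong to the Hilbert
space. -/
theorem ks_kg_not_square_integrable_at_infinity (κ : ℂ) (hκ : κ ≠ 0) :
    ¬ IntegrableOn
        (fun r : ℝ => r ^ 3 / (r - 1) * ‖Complex.sin (κ * r) / (r : ℂ)‖ ^ 2)
        (Set.Ioi 2) volume := by
  intro h
  have hκr : ∀ r : ℝ, (κ * r : ℂ)
      = ((κ.re * r : ℝ) : ℂ) + ((κ.im * r : ℝ) : ℂ) * Complex.I := by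
    intro r
    apply Complex.ext
    · simp [Complex.mul_re]
    · simp [Complex.mul_im]
  -- the simpler minorant `‖sin (κ r)‖²` is integrable
  have hg : IntegrableOn (fun r : ℝ => ‖Complex.sin (κ * r)‖ ^ 2)
      (Set.Ioi 2) volume := by
    refine h.mono' ?_ ?_
    · exact (Continuous.norm (by fun_prop)).pow 2 |>.aestronglyMeasurable
    · filter_upwards [ae_restrict_mem measurableSet_Ioi] with r hr
      have hr2 : (2 : ℝ) < r := hr
      have hr0 : (0 : ℝ) < r := by linarith
      have hr1 : (0 : ℝ) < r - 1 := by linarith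
      rw [Real.norm_eq_abs, abs_of_nonneg (by positivity)]
      have hnorm : ‖Complex.sin (κ * r) / (r : ℂ)‖
          = ‖Complex.sin (κ * r)‖ / r := by
        rw [norm_div, Complex.norm_real, Real.norm_eq_abs, abs_of_pos hr0]
      rw [hnorm]
      have key : r ^ 3 / (r - 1) * (‖Complex.sin (κ * r)‖ / r) ^ 2
          = (r / (r - 1)) * ‖Complex.sin (κ * r)‖ ^ 2 := by
        field_simp
      rw [key]
      have h1 : (1 : ℝ) ≤ r / (r - 1) := (one_le_div hr1).mpr (by linarith)
      nlinarith [sq_nonneg ‖Complex.sin (κ * r)‖]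
  by_cases him : κ.im = 0
  · -- real κ: use sin² + cos² = 1 together with translation invariance
    have hre : κ.re ≠ 0 := by
      intro h0
      exact hκ (Complex.ext h0 him)
    set a : ℝ := |κ.re| with ha_def
    have ha : 0 < a := abs_pos.mpr hre
    have hgs : (fun r : ℝ => ‖Complex.sin (κ * r)‖ ^ 2)
        = fun r : ℝ => Real.sin (a * r) ^ 2 := by
      funext r
      rw [hκr r, him, aux_norm_sin_sq]
      simp only [zero_mul, Real.sinh_zero, ne_eq, OfNat.ofNat_ne_zero,
        not_false_eq_true, zero_pow, add_zero]
      rcases abs_cases κ.re with ⟨h1, _⟩ | ⟨h1, _⟩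
      · rw [ha_def, h1]
      · rw [ha_def, h1, neg_mul, Real.sin_neg, neg_sq]
    rw [hgs] at hg
    set T : ℝ := Real.pi / (2 * a) with hT_def
    have hT : 0 < T := by positivity
    -- translate: cos²(a r) is also integrable on (2, ∞)
    have hmp : MeasurePreserving (fun x : ℝ => x + T) volume volume :=
      measurePreserving_add_right volume T
    have hme : MeasurableEmbedding (fun x : ℝ => x + T) :=
      (Homeomorph.addRight T).measurableEmbedding
    have hc' : IntegrableOn ((fun r : ℝ => Real.sin (a * r) ^ 2) ∘ (fun x : ℝ => x + T))
        ((fun x : ℝ => x + T) ⁻¹' Set.Ioi 2) volume :=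
      (hmp.integrableOn_comp_preimage hme).mpr hg
    rw [Set.preimage_add_const_Ioi] at hc'
    have hc : IntegrableOn (fun r : ℝ => Real.sin (a * (r + T)) ^ 2)
        (Set.Ioi 2) volume := by
      exact hc'.mono_set (Set.Ioi_subset_Ioi (by linarith : (2:ℝ) - T ≤ 2))
    have hsum : IntegrableOn
        (fun r : ℝ => Real.sin (a * r) ^ 2 + Real.sin (a * (r + T)) ^ 2)
        (Set.Ioi 2) volume := hg.add hc
    have hone : IntegrableOn (fun _ : ℝ => (1 : ℝ)) (Set.Ioi 2) volume := by
      refine hsum.congr_fun (fun r _ => ?_) measurableSet_Ioi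
      have haT : a * (r + T) = a * r + Real.pi / 2 := by
        rw [hT_def]
        field_simp
      beta_reduce
      rw [haT, Real.sin_add_pi_div_two]
      rw [Real.sin_sq_add_cos_sq]
    rw [integrableOn_const_iff] at hone
    simp [Real.volume_Ioi] at hone
  · -- complex κ: exponential growth, `‖sin (κ r)‖² ≥ 1` eventually
    set b : ℝ := |κ.im| with hb_def
    have hb : 0 < b := abs_pos.mpr him
    set M : ℝ := max 2 (1 / b) with hM_def
    have hone : IntegrableOn (fun _ : ℝ => (1 : ℝ)) (Set.Ioi M) volume := by
      refine (hg.mono_set (Set.Ioi_subset_Ioi (le_max_left _ _))).mono'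
        aestronglyMeasurable_const ?_
      filter_upwards [ae_restrict_mem measurableSet_Ioi] with r hr
      have hrM : M < r := hr
      have hr2 : (2 : ℝ) < r := lt_of_le_of_lt (le_max_left _ _) hrM
      have hrb : 1 / b < r := lt_of_le_of_lt (le_max_right _ _) hrM
      have hbr : 1 ≤ b * r := by
        rw [div_lt_iff₀ hb] at hrb
        nlinarith
      have hsinh : 1 ≤ Real.sinh (κ.im * r) ^ 2 := by
        have h1 : b * r ≤ Real.sinh (b * r) :=
          le_of_lt ((Real.self_lt_sinh_iff).mpr (by nlinarith))
        have h2 : 1 ≤ Real.sinh (b * r) := le_trans hbr h1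
        have h3 : Real.sinh (b * r) ^ 2 = Real.sinh (κ.im * r) ^ 2 := by
          rcases abs_cases κ.im with ⟨h4, _⟩ | ⟨h4, _⟩
          · rw [hb_def, h4]
          · rw [hb_def, h4, neg_mul, Real.sinh_neg, neg_sq]
        nlinarith
      rw [norm_one]
      rw [hκr r, aux_norm_sin_sq]
      nlinarith [sq_nonneg (Real.sin (κ.re * r))]
    rw [integrableOn_const_iff] at hone
    simp [Real.volume_Ioi] at hone
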